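/- The function H(θ) = SW(x(θ)), where x_n(θ) = min(θ, ε_n), is unimodal on [0, max_n ε_n]: there exists θ* such that H is nondecreasing on [0, θ*] and nonincreasing on [θ*, max_n ε_n]. -/

import Mathlib

open Finset

/-- Tangent line inequality for differentiable convex functions on `univ`. -/
lemma convex_tangent {f : ℝ → ℝ} (hf : ConvexOn ℝ Set.univ f) (hfd : Differentiable ℝ f)
    (x y : ℝ) : f x + deriv f x * (y - x) ≤ f y := by
  rcases lt_trichotomy x y with h | rfl | h
  · have h1 := hf.deriv_le_slope (Set.mem_univ x) (Set.mem_univ y) h (hfd x)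
    rw [slope_def_field] at h1
    have hy : 0 < y - x := sub_pos.2 h
    have h2 := (le_div_iff₀ hy).mp h1
    linarith
  · simp
  · have h1 := hf.slope_le_deriv (Set.mem_univ y) (Set.mem_univ x) h (hfd x)
    rw [slope_def_field] at h1
    have hy : 0 < x - y := sub_pos.2 h
    have h2 := (div_le_iff₀ hy).mp h1
    have h3 : deriv f x * (y - x) = -(deriv f x * (x - y)) := by ring
    linarith

/-- Tangent line inequality for differentiable concave functions on `univ`. -/
lemma concave_tangent {g : ℝ → ℝ} (hg : ConcaveOn ℝ Set.univ g) (hgd : Differentiable ℝ g)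
    (x y : ℝ) : g y ≤ g x + deriv g x * (y - x) := by
  have hg2 : ConvexOn ℝ Set.univ (fun t => -g t) := hg.neg
  have h1 := convex_tangent hg2 hgd.neg x y
  simp only [deriv.fun_neg] at h1
  linarith

/-- `H(b) ≤ H(a)` when `a ≤ b` and `φ(a) ≤ 0`. -/
lemma step_up {N : ℕ} (hN : 0 < N) (d w ε : Fin N → ℝ) (hd : ∀ n, 0 < d n) (hw : ∀ n, 0 < w n)
    (g f : ℝ → ℝ) (hgd : Differentiable ℝ g) (hfd : Differentiable ℝ f)
    (hg : ConcaveOn ℝ Set.univ g) (hf : ConvexOn ℝ Set.univ f)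
    {a b : ℝ} (hab : a ≤ b)
    (hφ : (∑ n, w n) * deriv g ((∑ i, d i * min a (ε i)) / ∑ i, d i)
      ≤ (∑ i, d i) * deriv f a) :
    (∑ n, w n) * g ((∑ i, d i * min b (ε i)) / ∑ i, d i)
        - ∑ n, d n * (f (min b (ε n)) - f (ε n))
      ≤ (∑ n, w n) * g ((∑ i, d i * min a (ε i)) / ∑ i, d i)
        - ∑ n, d n * (f (min a (ε n)) - f (ε n)) := by
  have hD : 0 < ∑ i, d i := Finset.sum_pos (fun i _ => hd i) ⟨⟨0, hN⟩, Finset.mem_univ _⟩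
  have hW : 0 < ∑ n, w n := Finset.sum_pos (fun i _ => hw i) ⟨⟨0, hN⟩, Finset.mem_univ _⟩
  set D := ∑ i, d i with hDdef
  set W := ∑ n, w n with hWdef
  set Xa := ∑ i, d i * min a (ε i) with hXa
  set Xb := ∑ i, d i * min b (ε i) with hXb
  have hs : 0 ≤ Xb - Xa := by
    rw [hXa, hXb]
    exact sub_nonneg.2 (Finset.sum_le_sum fun i _ =>
      mul_le_mul_of_nonneg_left (min_le_min hab le_rfl) (hd i).le)
  have hterm : ∀ n, d n * (deriv f a * (min b (ε n) - min a (ε n)))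
      ≤ d n * (f (min b (ε n)) - f (min a (ε n))) := by
    intro n
    rcases le_or_gt (ε n) a with h | h
    · rw [min_eq_right h, min_eq_right (h.trans hab)]; simp
    · rw [min_eq_left h.le]
      have ht := convex_tangent hf hfd a (min b (ε n))
      exact mul_le_mul_of_nonneg_left (by linarith) (hd n).le
  have hsum : deriv f a * (Xb - Xa) ≤ ∑ n, d n * (f (min b (ε n)) - f (min a (ε n))) := by
    have h1 : deriv f a * (Xb - Xa)
        = ∑ n, d n * (deriv f a * (min b (ε n) - min a (ε n))) := by
      rw [hXa, hXb, ← Finset.sum_sub_distrib, Finset.mul_sum]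
      exact Finset.sum_congr rfl fun i _ => by ring
    rw [h1]
    exact Finset.sum_le_sum fun n _ => hterm n
  have hg1 : g (Xb / D) ≤ g (Xa / D) + deriv g (Xa / D) * ((Xb - Xa) / D) := by
    have := concave_tangent hg hgd (Xa / D) (Xb / D)
    rwa [← sub_div] at this
  have e1 : W * g (Xb / D) - W * g (Xa / D) ≤ W * deriv g (Xa / D) * ((Xb - Xa) / D) := by
    have h := mul_le_mul_of_nonneg_left hg1 hW.le
    have h2 : W * (g (Xa / D) + deriv g (Xa / D) * ((Xb - Xa) / D))
        = W * g (Xa / D) + W * deriv g (Xa / D) * ((Xb - Xa) / D) := by ring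
    linarith
  have e2 : W * deriv g (Xa / D) * ((Xb - Xa) / D) ≤ deriv f a * (Xb - Xa) := by
    have h3 : (0 : ℝ) ≤ (Xb - Xa) / D := div_nonneg hs hD.le
    have h4 := mul_le_mul_of_nonneg_right hφ h3
    have h5 : D * deriv f a * ((Xb - Xa) / D) = deriv f a * (Xb - Xa) := by
      field_simp
    linarith
  have hT : (∑ n, d n * (f (min b (ε n)) - f (ε n))) - (∑ n, d n * (f (min a (ε n)) - f (ε n)))
      = ∑ n, d n * (f (min b (ε n)) - f (min a (ε n))) := by
    rw [← Finset.sum_sub_distrib]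
    exact Finset.sum_congr rfl fun i _ => by ring
  linarith

/-- `H(a) ≤ H(b)` when `a ≤ b` and `φ(b) ≥ 0`. -/
lemma step_down {N : ℕ} (hN : 0 < N) (d w ε : Fin N → ℝ) (hd : ∀ n, 0 < d n) (hw : ∀ n, 0 < w n)
    (g f : ℝ → ℝ) (hgd : Differentiable ℝ g) (hfd : Differentiable ℝ f)
    (hg : ConcaveOn ℝ Set.univ g) (hf : ConvexOn ℝ Set.univ f)
    {a b : ℝ} (hab : a ≤ b)
    (hφ : (∑ i, d i) * deriv f b
      ≤ (∑ n, w n) * deriv g ((∑ i, d i * min b (ε i)) / ∑ i, d i)) :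
    (∑ n, w n) * g ((∑ i, d i * min a (ε i)) / ∑ i, d i)
        - ∑ n, d n * (f (min a (ε n)) - f (ε n))
      ≤ (∑ n, w n) * g ((∑ i, d i * min b (ε i)) / ∑ i, d i)
        - ∑ n, d n * (f (min b (ε n)) - f (ε n)) := by
  have hD : 0 < ∑ i, d i := Finset.sum_pos (fun i _ => hd i) ⟨⟨0, hN⟩, Finset.mem_univ _⟩
  have hW : 0 < ∑ n, w n := Finset.sum_pos (fun i _ => hw i) ⟨⟨0, hN⟩, Finset.mem_univ _⟩
  have hf'mono : Monotone (deriv f) :=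
    monotoneOn_univ.1 (hf.monotoneOn_deriv fun x _ => hfd x)
  set D := ∑ i, d i with hDdef
  set W := ∑ n, w n with hWdef
  set Xa := ∑ i, d i * min a (ε i) with hXa
  set Xb := ∑ i, d i * min b (ε i) with hXb
  have hs : 0 ≤ Xb - Xa := by
    rw [hXa, hXb]
    exact sub_nonneg.2 (Finset.sum_le_sum fun i _ =>
      mul_le_mul_of_nonneg_left (min_le_min hab le_rfl) (hd i).le)
  have hterm : ∀ n, d n * (f (min b (ε n)) - f (min a (ε n)))
      ≤ d n * (deriv f b * (min b (ε n) - min a (ε n))) := by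
    intro n
    rcases le_or_gt (ε n) a with h | h
    · rw [min_eq_right h, min_eq_right (h.trans hab)]; simp
    · rw [min_eq_left h.le]
      have ht := convex_tangent hf hfd (min b (ε n)) a
      have hma : a ≤ min b (ε n) := le_min hab h.le
      have hmono := mul_le_mul_of_nonneg_right
        (hf'mono (min_le_left b (ε n))) (sub_nonneg.2 hma)
      have hring : deriv f (min b (ε n)) * (a - min b (ε n))
          = -(deriv f (min b (ε n)) * (min b (ε n) - a)) := by ring
      exact mul_le_mul_of_nonneg_left (by linarith) (hd n).le
  have hsum : (∑ n, d n * (f (min b (ε n)) - f (min a (ε n)))) ≤ deriv f b * (Xb - Xa) := by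
    have h1 : deriv f b * (Xb - Xa)
        = ∑ n, d n * (deriv f b * (min b (ε n) - min a (ε n))) := by
      rw [hXa, hXb, ← Finset.sum_sub_distrib, Finset.mul_sum]
      exact Finset.sum_congr rfl fun i _ => by ring
    rw [h1]
    exact Finset.sum_le_sum fun n _ => hterm n
  have hg1 : g (Xa / D) ≤ g (Xb / D) + deriv g (Xb / D) * (-((Xb - Xa) / D)) := by
    have := concave_tangent hg hgd (Xb / D) (Xa / D)
    have h2 : Xa / D - Xb / D = -((Xb - Xa) / D) := by rw [← sub_div]; ring
    rwa [h2] at this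
  have e1 : W * deriv g (Xb / D) * ((Xb - Xa) / D) ≤ W * g (Xb / D) - W * g (Xa / D) := by
    have h := mul_le_mul_of_nonneg_left hg1 hW.le
    have h2 : W * (g (Xb / D) + deriv g (Xb / D) * (-((Xb - Xa) / D)))
        = W * g (Xb / D) - W * deriv g (Xb / D) * ((Xb - Xa) / D) := by ring
    linarith
  have e2 : deriv f b * (Xb - Xa) ≤ W * deriv g (Xb / D) * ((Xb - Xa) / D) := by
    have h3 : (0 : ℝ) ≤ (Xb - Xa) / D := div_nonneg hs hD.le
    have h4 := mul_le_mul_of_nonneg_right hφ h3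
    have h5 : D * deriv f b * ((Xb - Xa) / D) = deriv f b * (Xb - Xa) := by
      field_simp
    linarith
  have hT : (∑ n, d n * (f (min b (ε n)) - f (ε n))) - (∑ n, d n * (f (min a (ε n)) - f (ε n)))
      = ∑ n, d n * (f (min b (ε n)) - f (min a (ε n))) := by
    rw [← Finset.sum_sub_distrib]
    exact Finset.sum_congr rfl fun i _ => by ring
  linarith

/-- `H(θ) = SW(x(θ))` with `x_n(θ) = min θ (ε n)` is unimodal on `[0, max_n ε_n]`:
there is `θ*` with `H` nondecreasing on `[0, θ*]` and nonincreasing on `[θ*, max_n ε_n]`. -/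
theorem H_unimodal (N : ℕ) (hN : 0 < N) (d w ε : Fin N → ℝ)
    (hd : ∀ n, 0 < d n) (hw : ∀ n, 0 < w n) (hε : ∀ n, 0 ≤ ε n)
    (g f : ℝ → ℝ) (hgd : Differentiable ℝ g) (hfd : Differentiable ℝ f)
    (hg : ConcaveOn ℝ Set.univ g) (hg' : Antitone g)
    (hf : StrictConvexOn ℝ Set.univ f) (hf' : Antitone f)
    (H : ℝ → ℝ)
    (hH : H = fun θ => (∑ n, w n) * g ((∑ i, d i * min θ (ε i)) / ∑ i, d i)
      - ∑ n, d n * (f (min θ (ε n)) - f (ε n))) :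
    ∃ θstar ∈ Set.Icc (0 : ℝ)
        (Finset.univ.sup' (Finset.univ_nonempty_iff.mpr ⟨⟨0, hN⟩⟩) ε),
      MonotoneOn H (Set.Icc 0 θstar) ∧
      AntitoneOn H (Set.Icc θstar
        (Finset.univ.sup' (Finset.univ_nonempty_iff.mpr ⟨⟨0, hN⟩⟩) ε)) := by
  have hD : 0 < ∑ i, d i := Finset.sum_pos (fun i _ => hd i) ⟨⟨0, hN⟩, Finset.mem_univ _⟩
  have hW : 0 < ∑ n, w n := Finset.sum_pos (fun i _ => hw i) ⟨⟨0, hN⟩, Finset.mem_univ _⟩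
  set M := Finset.univ.sup' (Finset.univ_nonempty_iff.mpr ⟨⟨0, hN⟩⟩) ε with hMdef
  have hM0 : (0 : ℝ) ≤ M :=
    le_trans (hε ⟨0, hN⟩) (Finset.le_sup' ε (Finset.mem_univ ⟨0, hN⟩))
  set φ : ℝ → ℝ := fun θ =>
    (∑ n, w n) * deriv g ((∑ i, d i * min θ (ε i)) / ∑ i, d i) - (∑ i, d i) * deriv f θ
    with hφdef
  have hganti : Antitone (deriv g) :=
    antitoneOn_univ.1 (hg.antitoneOn_deriv fun x _ => hgd x)
  have hf'mono : Monotone (deriv f) :=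
    monotoneOn_univ.1 (hf.convexOn.monotoneOn_deriv fun x _ => hfd x)
  have hφanti : Antitone φ := by
    intro a b hab
    simp only [hφdef]
    have hXle : (∑ i, d i * min a (ε i)) ≤ ∑ i, d i * min b (ε i) :=
      Finset.sum_le_sum fun i _ =>
        mul_le_mul_of_nonneg_left (min_le_min hab le_rfl) (hd i).le
    have h1 : deriv g ((∑ i, d i * min b (ε i)) / ∑ i, d i)
        ≤ deriv g ((∑ i, d i * min a (ε i)) / ∑ i, d i) :=
      hganti ((div_le_div_iff_of_pos_right hD).2 hXle)
    have h2 : deriv f a ≤ deriv f b := hf'mono hab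
    have h3 := mul_le_mul_of_nonneg_left h1 hW.le
    have h4 := mul_le_mul_of_nonneg_left h2 hD.le
    linarith
  have key1 : ∀ a b : ℝ, a ≤ b → φ a ≤ 0 → H b ≤ H a := by
    intro a b hab h
    simp only [hφdef] at h
    simp only [hH]
    exact step_up hN d w ε hd hw g f hgd hfd hg hf.convexOn hab (by linarith)
  have key2 : ∀ a b : ℝ, a ≤ b → 0 ≤ φ b → H a ≤ H b := by
    intro a b hab h
    simp only [hφdef] at h
    simp only [hH]
    exact step_down hN d w ε hd hw g f hgd hfd hg hf.convexOn hab (by linarith)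
  have hHc : Continuous H := by
    rw [hH]
    apply Continuous.sub
    · exact continuous_const.mul (hgd.continuous.comp
        ((continuous_finset_sum _ fun i _ =>
          continuous_const.mul (continuous_id.min continuous_const)).div_const _))
    · exact continuous_finset_sum _ fun n _ =>
        continuous_const.mul ((hfd.continuous.comp
          (continuous_id.min continuous_const)).sub continuous_const)
  set S : Set ℝ := {θ : ℝ | (θ ∈ Set.Icc 0 M ∧ 0 ≤ φ θ) ∨ θ = 0} with hSdef
  have hne : S.Nonempty := ⟨0, Or.inr rfl⟩
  have hbdd : BddAbove S := by
    refine ⟨M, fun x hx => ?_⟩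
    rcases hx with ⟨⟨_, hx2⟩, _⟩ | rfl
    · exact hx2
    · exact hM0
  set θstar := sSup S with hθdef
  have hθ0 : 0 ≤ θstar := le_csSup hbdd (Or.inr rfl)
  have hθM : θstar ≤ M := csSup_le hne (fun x hx => by
    rcases hx with ⟨⟨_, hx2⟩, _⟩ | rfl
    · exact hx2
    · exact hM0)
  have hpos : ∀ t : ℝ, 0 ≤ t → t < θstar → 0 ≤ φ t := by
    intro t ht0 htθ
    obtain ⟨s, hsS, hts⟩ := exists_lt_of_lt_csSup hne htθ
    rcases hsS with ⟨_, hφs⟩ | rfl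
    · exact hφs.trans (hφanti hts.le)
    · exact absurd hts (not_lt.2 ht0)
  have hneg : ∀ t : ℝ, θstar < t → t ≤ M → φ t < 0 := by
    intro t h1 h2
    by_contra h
    push_neg at h
    have hts : t ∈ S := Or.inl ⟨⟨le_trans hθ0 h1.le, h2⟩, h⟩
    exact absurd (le_csSup hbdd hts) (not_le.2 h1)
  refine ⟨θstar, ⟨hθ0, hθM⟩, ?_, ?_⟩
  · -- MonotoneOn on [0, θstar]
    intro a ha b hb hab
    rcases eq_or_lt_of_le hab with rfl | hab'
    · exact le_rfl
    rcases eq_or_lt_of_le hb.2 with heq | hbθ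
    · -- b = θstar: take the limit from the left
      have hev : ∀ᶠ t in nhdsWithin b (Set.Iio b), H a ≤ H t := by
        filter_upwards [Ioo_mem_nhdsLT hab'] with t ht
        exact key2 a t ht.1.le (hpos t (le_trans ha.1 ht.1.le) (heq ▸ ht.2))
      exact ge_of_tendsto (hHc.continuousAt.tendsto.mono_left nhdsWithin_le_nhds) hev
    · exact key2 a b hab (hpos b (le_trans ha.1 hab) hbθ)
  · -- AntitoneOn on [θstar, M]
    intro a ha b hb hab
    rcases eq_or_lt_of_le hab with rfl | hab'
    · exact le_rfl
    rcases eq_or_lt_of_le ha.1 with heq | haθ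
    · -- a = θstar: take the limit from the right
      have hev : ∀ᶠ t in nhdsWithin a (Set.Ioi a), H b ≤ H t := by
        filter_upwards [Ioo_mem_nhdsGT hab'] with t ht
        exact key1 t b ht.2.le
          (hneg t (by rw [heq]; exact ht.1) (le_trans ht.2.le hb.2)).le
      exact ge_of_tendsto (hHc.continuousAt.tendsto.mono_left nhdsWithin_le_nhds) hev
    · exact key1 a b hab (hneg a haθ ha.2).le
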